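/- arXiv:1803.10153 — 2 statements merged into one kernel-verified Lean document; each statement's English description precedes it below -/
import Mathlib

section
/- Let H be an infinite finitely generated group with word metric d_H. Then the combinatorial horoballs C_f(H) with f(n) = 2^n and C_g(H) with g(n) = 2^(2^n) are not quasi-isometric by any map that sends the level-0 set into a bounded-height neighborhood of the level-0 set and sends vertical rays to vertical rays. -/
/-- The combinatorial horoball over a graph `Γ` with scaling function `f`. -/
def horoball {V : Type*} (Γ : SimpleGraph V) (f : ℕ → ℕ) : SimpleGraph (V × ℕ) :=
  SimpleGraph.fromRel (fun a b =>
    (a.1 = b.1 ∧ b.2 = a.2 + 1) ∨ (a.2 = b.2 ∧ Γ.dist a.1 b.1 ≤ f a.2))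

/-- The Cayley graph of a group with respect to a generating set. -/
def cayley (H : Type*) [Group H] (S : Set H) : SimpleGraph H :=
  SimpleGraph.fromRel (fun a b => a⁻¹ * b ∈ S)

open SimpleGraph

section HoroAux

variable {V : Type*} {Γ : SimpleGraph V} {f : ℕ → ℕ}

lemma horoball_adj_up (a : V) (n : ℕ) : (horoball Γ f).Adj (a, n) (a, n + 1) := by
  rw [horoball, SimpleGraph.fromRel_adj]
  exact ⟨by simp, Or.inl (Or.inl ⟨rfl, rfl⟩)⟩

lemma horoball_adj_horiz {a b : V} (hab : a ≠ b) {n : ℕ} (h : Γ.dist a b ≤ f n) :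
    (horoball Γ f).Adj (a, n) (b, n) := by
  rw [horoball, SimpleGraph.fromRel_adj]
  exact ⟨by simp [hab], Or.inl (Or.inr ⟨rfl, h⟩)⟩

lemma horoball_exists_vert_walk (a : V) (i k : ℕ) :
    ∃ p : (horoball Γ f).Walk (a, i) (a, i + k), p.length = k := by
  induction k with
  | zero => exact ⟨Walk.nil, rfl⟩
  | succ k ih =>
    obtain ⟨p, hp⟩ := ih
    exact ⟨p.concat (horoball_adj_up a (i + k)), by simp [Walk.length_concat, hp]⟩

lemma horoball_vert_dist_le (a : V) {i j : ℕ} (hij : i ≤ j) :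
    (horoball Γ f).dist (a, i) (a, j) ≤ j - i := by
  obtain ⟨p, hp⟩ := horoball_exists_vert_walk (Γ := Γ) (f := f) a i (j - i)
  have h2 : (a, i + (j - i)) = (a, j) := by rw [Nat.add_sub_cancel' hij]
  calc (horoball Γ f).dist (a, i) (a, j) ≤ (p.copy rfl h2).length := dist_le _
    _ = j - i := by rw [Walk.length_copy, hp]

lemma horoball_vert_reach (a : V) (i j : ℕ) :
    (horoball Γ f).Reachable (a, i) (a, j) := by
  rcases le_total i j with h | h
  · obtain ⟨p, _⟩ := horoball_exists_vert_walk (Γ := Γ) (f := f) a i (j - i)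
    have h2 : (a, i + (j - i)) = (a, j) := by rw [Nat.add_sub_cancel' h]
    exact ⟨p.copy rfl h2⟩
  · obtain ⟨p, _⟩ := horoball_exists_vert_walk (Γ := Γ) (f := f) a j (i - j)
    have h2 : (a, j + (i - j)) = (a, i) := by rw [Nat.add_sub_cancel' h]
    exact (Reachable.symm ⟨p.copy rfl h2⟩)

lemma horoball_connected [Nonempty V] (hf : ∀ n, n ≤ f n) :
    (horoball Γ f).Connected := by
  rw [connected_iff]
  refine ⟨fun u v => ?_, inferInstance⟩
  obtain ⟨a, i⟩ := u
  obtain ⟨b, j⟩ := v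
  by_cases hab : a = b
  · subst hab; exact horoball_vert_reach a i j
  · have h1 : (horoball Γ f).Reachable (a, i) (a, Γ.dist a b) := horoball_vert_reach a i _
    have h2 : (horoball Γ f).Adj (a, Γ.dist a b) (b, Γ.dist a b) :=
      horoball_adj_horiz hab (hf _)
    have h3 : (horoball Γ f).Reachable (b, Γ.dist a b) (b, j) := horoball_vert_reach b _ j
    exact (h1.trans h2.reachable).trans h3

end HoroAux
section HoroAux2

open SimpleGraph
variable {V : Type*} {Γ : SimpleGraph V} {f : ℕ → ℕ}

/-- Any walk in the horoball displaces the `Γ`-coordinate by at most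
`length * f (start-height + length)`. -/
lemma horoball_walk_bound (hconn : Γ.Connected) (hmono : Monotone f) :
    ∀ {u v : V × ℕ} (p : (horoball Γ f).Walk u v),
      Γ.dist u.1 v.1 ≤ p.length * f (u.2 + p.length) := by
  intro u v p
  induction p with
  | nil => simp
  | @cons u w v h q ih =>
    rw [horoball, SimpleGraph.fromRel_adj] at h
    obtain ⟨hne, hrel⟩ := h
    have hd : Γ.dist u.1 w.1 ≤ f u.2 := by
      rcases hrel with (⟨h1, _⟩ | ⟨_, h2⟩) | (⟨h1, _⟩ | ⟨h2, h3⟩)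
      · rw [h1, SimpleGraph.dist_self]; exact Nat.zero_le _
      · exact h2
      · rw [← h1, SimpleGraph.dist_self]; exact Nat.zero_le _
      · rw [Γ.dist_comm]; exact h3.trans (hmono (le_of_eq h2))
    have hh : w.2 ≤ u.2 + 1 := by
      rcases hrel with (⟨_, h1⟩ | ⟨h2, _⟩) | (⟨_, h1⟩ | ⟨h2, _⟩) <;> omega
    have tri : Γ.dist u.1 v.1 ≤ Γ.dist u.1 w.1 + Γ.dist w.1 v.1 := hconn.dist_triangle
    have hlen : (Walk.cons (by rwa [horoball, SimpleGraph.fromRel_adj]) q :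
        (horoball Γ f).Walk u v).length = q.length + 1 := Walk.length_cons _ _
    rw [hlen]
    have h1 : f u.2 ≤ f (u.2 + (q.length + 1)) := hmono (by omega)
    have h2 : f (w.2 + q.length) ≤ f (u.2 + (q.length + 1)) := hmono (by omega)
    calc Γ.dist u.1 v.1 ≤ Γ.dist u.1 w.1 + Γ.dist w.1 v.1 := tri
      _ ≤ f u.2 + q.length * f (w.2 + q.length) := Nat.add_le_add hd ih
      _ ≤ f (u.2 + (q.length + 1)) + q.length * f (u.2 + (q.length + 1)) :=
          Nat.add_le_add h1 (Nat.mul_le_mul_left _ h2)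
      _ = (q.length + 1) * f (u.2 + (q.length + 1)) := by ring

/-- Upper bound on horoball distance: go up to a level where crossing is possible. -/
lemma horoball_dist_le [Nonempty V] (hf : ∀ n, n ≤ f n) (hmono : Monotone f)
    {a b : V} {h h' n : ℕ} (hd : Γ.dist a b ≤ f n) :
    (horoball Γ f).dist (a, h) (b, h') ≤ 2 * n + h + h' + 1 := by
  have hconn : (horoball Γ f).Connected := horoball_connected hf
  by_cases hab : a = b
  · subst hab
    rcases le_total h h' with hle | hle
    · have := horoball_vert_dist_le (Γ := Γ) (f := f) a hle
      omega
    · have := horoball_vert_dist_le (Γ := Γ) (f := f) a hle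
      rw [SimpleGraph.dist_comm]
      omega
  · set q := max n (max h h') with hq
    have hn : n ≤ q := le_max_left _ _
    have hhq : h ≤ q := le_trans (le_max_left _ _) (le_max_right _ _)
    have hh'q : h' ≤ q := le_trans (le_max_right _ _) (le_max_right _ _)
    have hqle : q ≤ n + h + h' := by
      apply max_le (by omega) (max_le (by omega) (by omega))
    have t1 : (horoball Γ f).dist (a, h) (a, q) ≤ q - h :=
      horoball_vert_dist_le a hhq
    have t2 : (horoball Γ f).dist (a, q) (b, q) ≤ 1 := by
      have := (horoball_adj_horiz (f := f) hab (hd.trans (hmono hn)))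
      calc (horoball Γ f).dist (a, q) (b, q) ≤ (Walk.cons this Walk.nil).length := dist_le _
        _ = 1 := rfl
    have t3 : (horoball Γ f).dist (b, q) (b, h') ≤ q - h' := by
      rw [SimpleGraph.dist_comm]
      exact horoball_vert_dist_le b hh'q
    have tri1 : (horoball Γ f).dist (a, h) (b, h') ≤
        (horoball Γ f).dist (a, h) (a, q) + (horoball Γ f).dist (a, q) (b, h') :=
      hconn.dist_triangle
    have tri2 : (horoball Γ f).dist (a, q) (b, h') ≤
        (horoball Γ f).dist (a, q) (b, q) + (horoball Γ f).dist (b, q) (b, h') :=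
      hconn.dist_triangle
    omega

end HoroAux2
section CayleyAux

open SimpleGraph Pointwise
variable {H : Type*} [Group H] {S : Set H}

/-- Left translation is a graph homomorphism of the Cayley graph. -/
def cayleyMul (g : H) : cayley H S →g cayley H S where
  toFun x := g * x
  map_rel' := by
    intro a b hab
    rw [cayley, SimpleGraph.fromRel_adj] at hab ⊢
    obtain ⟨hne, hrel⟩ := hab
    refine ⟨by simpa using hne, ?_⟩
    simpa [mul_assoc] using hrel

@[simp] lemma cayleyMul_apply (g x : H) : (cayleyMul (S := S) g) x = g * x := rfl

lemma cayley_reach_one (hgen : Subgroup.closure S = ⊤) (z : H) :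
    (cayley H S).Reachable 1 z := by
  have hz : z ∈ Subgroup.closure S := by rw [hgen]; trivial
  induction hz using Subgroup.closure_induction with
  | mem s hs =>
    by_cases h1 : s = (1 : H)
    · rw [h1]
    · refine SimpleGraph.Adj.reachable ?_
      rw [cayley, SimpleGraph.fromRel_adj]
      exact ⟨Ne.symm h1, Or.inl (by simpa using hs)⟩
  | one => rfl
  | mul x y hx hy ihx ihy =>
    refine ihx.trans ?_
    have h2 := ihy.map (cayleyMul (S := S) x)
    simpa using h2
  | inv x hx ihx =>
    have h2 := ihx.map (cayleyMul (S := S) x⁻¹)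
    simp only [cayleyMul_apply, mul_one, inv_mul_cancel] at h2
    exact h2.symm

lemma cayley_connected (hgen : Subgroup.closure S = ⊤) : (cayley H S).Connected := by
  rw [connected_iff]
  exact ⟨fun u v => ((cayley_reach_one hgen u).symm.trans (cayley_reach_one hgen v)),
    ⟨1⟩⟩

lemma cayley_walk_mem_pow {T : Set H} (hST : S ⊆ T) (hSinv : S⁻¹ ⊆ T) :
    ∀ {a b : H} (p : (cayley H S).Walk a b), a⁻¹ * b ∈ T ^ p.length := by
  intro a b p
  induction p with
  | nil => simp [pow_zero, Set.mem_one]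
  | @cons a w b h q ih =>
    rw [cayley, SimpleGraph.fromRel_adj] at h
    have hmem : a⁻¹ * w ∈ T := by
      rcases h.2 with h1 | h1
      · exact hST h1
      · refine hSinv ?_
        rw [Set.mem_inv]
        simpa using h1
    have heq : a⁻¹ * b = (a⁻¹ * w) * (w⁻¹ * b) := by group
    rw [Walk.length_cons, heq, pow_succ']
    exact Set.mul_mem_mul hmem ih

lemma pow_subset_pow_of_one_mem {T : Set H} (hT : (1 : H) ∈ T) {m n : ℕ} (h : m ≤ n) :
    T ^ m ⊆ T ^ n := by
  induction n with
  | zero => simp [Nat.le_zero.mp h]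
  | succ n ih =>
    rcases Nat.lt_or_ge m (n + 1) with h2 | h2
    · intro x hx
      have hx2 : x ∈ T ^ n := ih (by omega) hx
      have : x * 1 ∈ T ^ n * T := Set.mul_mem_mul hx2 hT
      simpa [pow_succ] using this
    · have : m = n + 1 := by omega
      subst this
      exact subset_rfl

lemma set_pow_finite {T : Set H} (hT : T.Finite) (n : ℕ) : (T ^ n).Finite := by
  induction n with
  | zero => simp only [pow_zero]; exact Set.finite_one
  | succ n ih => rw [pow_succ]; exact ih.mul hT

/-- In an infinite group there are points arbitrarily far from the identity. -/
lemma cayley_escape [Infinite H] (hS : S.Finite) (hgen : Subgroup.closure S = ⊤) (r : ℕ) :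
    ∃ z : H, r < (cayley H S).dist 1 z := by
  classical
  set T : Set H := S ∪ S⁻¹ ∪ {1} with hT
  have hTfin : T.Finite := (hS.union hS.inv).union (Set.finite_singleton 1)
  have hfin : (T ^ r).Finite := set_pow_finite hTfin r
  obtain ⟨z, hz⟩ := hfin.infinite_compl.nonempty
  refine ⟨z, ?_⟩
  by_contra hle
  push_neg at hle
  obtain ⟨p, hp⟩ := ((cayley_connected hgen) 1 z).exists_walk_length_eq_dist
  have hmem : (1 : H)⁻¹ * z ∈ T ^ p.length :=
    cayley_walk_mem_pow (by intro t ht; exact Or.inl (Or.inl ht))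
      (by intro t ht; exact Or.inl (Or.inr ht)) p
  have hmem2 : z ∈ T ^ r := by
    refine pow_subset_pow_of_one_mem (by right; rfl) (hp ▸ hle : p.length ≤ r) ?_
    simpa using hmem
  exact hz hmem2

end CayleyAux
section ArithAux

/-- Linear functions are eventually dominated by `2 ^ ·`. -/
lemma lin_lt_two_pow (a b : ℕ) : ∃ N, ∀ u, N ≤ u → a * u + b < 2 ^ u := by
  refine ⟨2 * (a + b) + 4, ?_⟩
  intro u hu
  induction u, hu using Nat.le_induction with
  | base =>
    have h1 : a + b < 2 ^ (a + b) := Nat.lt_two_pow_self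
    have h2 : 2 ^ (2 * (a + b) + 4) = 16 * (2 ^ (a + b)) * (2 ^ (a + b)) := by
      rw [two_mul, pow_add, pow_add]; ring
    rw [h2]
    nlinarith
  | succ u hu ih =>
    have ha : a < 2 ^ u := by
      have h1 : a ≤ u := by omega
      have h2 : u < 2 ^ u := Nat.lt_two_pow_self
      omega
    have h3 : a * (u + 1) + b = (a * u + b) + a := by ring
    rw [h3, pow_succ]
    omega

end ArithAux
set_option maxHeartbeats 1000000 in
open SimpleGraph Pointwise in
/-- For an infinite finitely generated group `H`, the combinatorial horoballs with
scaling functions `2^n` and `2^(2^n)` are not quasi-isometric by any map sending the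
level-0 set into a bounded-height region and vertical rays to vertical rays. -/
theorem horoballs_not_quasi_isometric
    (H : Type) [Group H] [Infinite H] (S : Set H) (hS : S.Finite)
    (hgen : Subgroup.closure S = ⊤) :
    ¬ ∃ (φ : H × ℕ → H × ℕ) (c D : ℝ), 0 < c ∧ 0 ≤ D ∧
      (∀ a b : H × ℕ,
        (1 / c) * ((horoball (cayley H S) (fun n => 2 ^ n)).dist a b : ℝ) - c ≤
          ((horoball (cayley H S) (fun n => 2 ^ 2 ^ n)).dist (φ a) (φ b) : ℝ) ∧
        ((horoball (cayley H S) (fun n => 2 ^ 2 ^ n)).dist (φ a) (φ b) : ℝ) ≤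
          c * ((horoball (cayley H S) (fun n => 2 ^ n)).dist a b : ℝ) + c) ∧
      (∀ b : H × ℕ, ∃ a : H × ℕ,
        ((horoball (cayley H S) (fun n => 2 ^ 2 ^ n)).dist (φ a) b : ℝ) ≤ c) ∧
      (∀ x : H, ((φ (x, 0)).2 : ℝ) ≤ D) ∧
      (∀ x : H, ∃ y : H, ∀ i : ℕ, (φ (x, i)).1 = y) := by
  rintro ⟨φ, c, D, hc, hD, hQI, -, hlev, -⟩
  classical
  have hWconn : (cayley H S).Connected := cayley_connected hgen
  have hfmono : Monotone (fun n : ℕ => 2 ^ n) :=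
    fun i j hij => Nat.pow_le_pow_right (by norm_num) hij
  have hgmono : Monotone (fun n : ℕ => 2 ^ 2 ^ n) :=
    fun i j hij => Nat.pow_le_pow_right (by norm_num)
      (Nat.pow_le_pow_right (by norm_num) hij)
  have hfle : ∀ n : ℕ, n ≤ 2 ^ n := fun n => (Nat.lt_two_pow_self (n := n)).le
  have hgle : ∀ n : ℕ, n ≤ 2 ^ 2 ^ n := fun n => (hfle n).trans
    (Nat.pow_le_pow_right (by norm_num) (hfle n))
  have hGfconn : (horoball (cayley H S) (fun n => 2 ^ n)).Connected :=
    horoball_connected hfle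
  have hGgconn : (horoball (cayley H S) (fun n => 2 ^ 2 ^ n)).Connected :=
    horoball_connected hgle
  set c' : ℕ := ⌈c⌉₊ with hc'def
  set D' : ℕ := ⌈D⌉₊ with hD'def
  have hcc' : c ≤ (c' : ℝ) := Nat.le_ceil c
  have hc'pos : 0 < c' := Nat.ceil_pos.mpr hc
  have hlev' : ∀ x : H, (φ (x, 0)).2 ≤ D' := by
    intro x
    have h1 : ((φ (x, 0)).2 : ℝ) ≤ (D' : ℝ) := (hlev x).trans (Nat.le_ceil D)
    exact_mod_cast h1
  -- the uniform step bound
  set P : ℕ := 2 * c' * 2 ^ 2 ^ (D' + 2 * c') with hPdef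
  have hstep : ∀ x x' : H, (cayley H S).Adj x x' →
      (cayley H S).dist (φ (x, 0)).1 (φ (x', 0)).1 ≤ P := by
    intro x x' hadj
    have hd1 : (cayley H S).dist x x' ≤ 1 := by
      have := dist_le (Walk.cons hadj Walk.nil)
      simpa using this
    have hadj2 : (horoball (cayley H S) (fun n => 2 ^ n)).Adj (x, 0) (x', 0) :=
      horoball_adj_horiz hadj.ne (by simpa using hd1)
    have hdf : (horoball (cayley H S) (fun n => 2 ^ n)).dist (x, 0) (x', 0) ≤ 1 := by
      have := dist_le (Walk.cons hadj2 Walk.nil)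
      simpa using this
    have h2 := (hQI (x, 0) (x', 0)).2
    have hdfR : (((horoball (cayley H S) (fun n => 2 ^ n)).dist (x, 0) (x', 0) : ℕ) : ℝ) ≤ 1 := by
      exact_mod_cast hdf
    have hk0R : (((horoball (cayley H S) (fun n => 2 ^ 2 ^ n)).dist (φ (x, 0)) (φ (x', 0)) : ℕ) : ℝ)
        ≤ ((2 * c' : ℕ) : ℝ) := by
      push_cast
      nlinarith [h2, hdfR, hc, hcc']
    have hk0 : (horoball (cayley H S) (fun n => 2 ^ 2 ^ n)).dist (φ (x, 0)) (φ (x', 0)) ≤ 2 * c' :=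
      by exact_mod_cast hk0R
    obtain ⟨p, hp⟩ := (hGgconn (φ (x, 0)) (φ (x', 0))).exists_walk_length_eq_dist
    have hb := horoball_walk_bound hWconn hgmono p
    rw [hp] at hb
    refine le_trans hb ?_
    have hexp : (φ (x, 0)).2 + (horoball (cayley H S) (fun n => 2 ^ 2 ^ n)).dist (φ (x, 0)) (φ (x', 0))
        ≤ D' + 2 * c' := Nat.add_le_add (hlev' x) hk0
    exact Nat.mul_le_mul hk0 (hgmono hexp)
  -- chaining the step bound along a walk
  have hchain : ∀ (a b : H) (p : (cayley H S).Walk a b),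
      (cayley H S).dist (φ (a, 0)).1 (φ (b, 0)).1 ≤ p.length * P := by
    intro a b p
    induction p with
    | nil => simp
    | @cons a w b h q ih =>
      have tri : (cayley H S).dist (φ (a, 0)).1 (φ (b, 0)).1 ≤
          (cayley H S).dist (φ (a, 0)).1 (φ (w, 0)).1 +
          (cayley H S).dist (φ (w, 0)).1 (φ (b, 0)).1 := hWconn.dist_triangle
      have hs := hstep a w h
      rw [Walk.length_cons]
      calc (cayley H S).dist (φ (a, 0)).1 (φ (b, 0)).1
          ≤ P + q.length * P := by omega
        _ = (q.length + 1) * P := by ring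
  -- numerical constants
  set p₀ : ℕ := Nat.clog 2 P with hp₀def
  set p₁ : ℕ := Nat.clog 2 (p₀ + 1) with hp₁def
  set A : ℕ := 4 * c' with hAdef
  set C₁ : ℕ := 2 * c' * (2 * D' + 1) + 2 * (c' * c') with hC₁def
  set C₂ : ℕ := A * p₁ + C₁ with hC₂def
  obtain ⟨N, hN⟩ := lin_lt_two_pow (2 * A) (2 * C₂ + 1)
  obtain ⟨z, hz⟩ := cayley_escape hS hgen (2 ^ 2 ^ (N + 2))
  set ℓ : ℕ := (cayley H S).dist 1 z with hℓdef
  -- chain bound : M ≤ ℓ * P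
  obtain ⟨pz, hpz⟩ := (hWconn 1 z).exists_walk_length_eq_dist
  set M : ℕ := (cayley H S).dist (φ (1, 0)).1 (φ (z, 0)).1 with hMdef
  have hM : M ≤ ℓ * P := by
    have := hchain 1 z pz
    rwa [hpz] at this
  set n : ℕ := Nat.clog 2 (Nat.clog 2 M) with hndef
  set m : ℕ := (horoball (cayley H S) (fun n => 2 ^ n)).dist ((1 : H), 0) (z, 0) with hmdef
  set k : ℕ := (horoball (cayley H S) (fun n => 2 ^ 2 ^ n)).dist (φ ((1 : H), 0)) (φ (z, 0))
    with hkdef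
  -- lower bound in the domain horoball : ℓ ≤ 2 ^ (2 * m)
  obtain ⟨pf, hpf⟩ := (hGfconn ((1 : H), 0) (z, 0)).exists_walk_length_eq_dist
  have hb := horoball_walk_bound hWconn hfmono pf
  rw [hpf] at hb
  have hℓm : ℓ ≤ 2 ^ (2 * m) := by
    refine le_trans hb ?_
    calc m * 2 ^ (0 + m) ≤ 2 ^ m * 2 ^ m := by
          rw [Nat.zero_add]
          exact Nat.mul_le_mul_right _ (hfle m)
      _ = 2 ^ (2 * m) := by rw [← pow_add, two_mul]
  -- upper bound in the range horoball : k ≤ 2n + 2D' + 1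
  have hMn : (cayley H S).dist (φ ((1 : H), 0)).1 (φ (z, 0)).1 ≤ 2 ^ 2 ^ n := by
    calc (cayley H S).dist (φ ((1 : H), 0)).1 (φ (z, 0)).1 ≤ 2 ^ Nat.clog 2 M :=
          Nat.le_pow_clog one_lt_two M
      _ ≤ 2 ^ 2 ^ n := Nat.pow_le_pow_right (by norm_num) (Nat.le_pow_clog one_lt_two _)
  have hk : k ≤ 2 * n + 2 * D' + 1 := by
    have hdle := horoball_dist_le (Γ := cayley H S) (f := fun n => 2 ^ 2 ^ n) hgle hgmono
      (h := (φ ((1 : H), 0)).2) (h' := (φ (z, 0)).2) (n := n) hMn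
    rw [Prod.mk.eta, Prod.mk.eta] at hdle
    have h1 := hlev' 1
    have h2 := hlev' z
    omega
  -- quasi-isometry lower bound : m ≤ c' k + c' c'
  have hm : m ≤ c' * k + c' * c' := by
    have h1 := (hQI ((1 : H), 0) (z, 0)).1
    have h2 : (m : ℝ) ≤ c * k + c * c := by
      have h3 : c * ((1 / c) * (m : ℝ) - c) = m - c * c := by field_simp
      nlinarith [mul_le_mul_of_nonneg_left h1 hc.le]
    have h4 : (m : ℝ) ≤ ((c' * k + c' * c' : ℕ) : ℝ) := by
      push_cast
      nlinarith [hcc', hc.le, Nat.cast_nonneg (α := ℝ) k]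
    exact_mod_cast h4
  -- put everything together
  set t : ℕ := Nat.clog 2 ℓ with htdef
  have ht2m : t ≤ 2 * m := (Nat.clog_le_iff_le_pow one_lt_two).mpr hℓm
  have htA : t ≤ A * n + C₁ := by
    calc t ≤ 2 * m := ht2m
      _ ≤ 2 * (c' * k + c' * c') := Nat.mul_le_mul_left _ hm
      _ = 2 * c' * k + 2 * (c' * c') := by ring
      _ ≤ 2 * c' * (2 * n + 2 * D' + 1) + 2 * (c' * c') :=
          Nat.add_le_add_right (Nat.mul_le_mul_left _ hk) _
      _ = A * n + C₁ := by rw [hAdef, hC₁def]; ring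
  have hℓlarge : 2 ^ 2 ^ (N + 2) ≤ ℓ := hz.le
  have ht1 : 2 ^ (N + 2) ≤ t := by
    have := Nat.clog_mono_right 2 hℓlarge
    rwa [Nat.clog_pow _ _ one_lt_two] at this
  have htpos : 2 ≤ t := by
    calc (2 : ℕ) = 2 ^ 1 := rfl
      _ ≤ 2 ^ (N + 2) := Nat.pow_le_pow_right (by norm_num) (by omega)
      _ ≤ t := ht1
  have hn_t : n ≤ Nat.clog 2 t + p₁ := by
    have h7 : n ≤ Nat.clog 2 (Nat.clog 2 (ℓ * P)) :=
      Nat.clog_mono_right 2 (Nat.clog_mono_right 2 hM)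
    have h8 : Nat.clog 2 (ℓ * P) ≤ t + p₀ := by
      refine (Nat.clog_le_iff_le_pow one_lt_two).mpr ?_
      rw [pow_add]
      exact Nat.mul_le_mul (Nat.le_pow_clog one_lt_two ℓ) (Nat.le_pow_clog one_lt_two P)
    have h9 : t + p₀ ≤ t * (p₀ + 1) := by
      have hp9 : p₀ ≤ t * p₀ := Nat.le_mul_of_pos_left _ (by omega)
      calc t + p₀ ≤ t + t * p₀ := Nat.add_le_add_left hp9 t
        _ = t * (p₀ + 1) := by ring
    have h10 : Nat.clog 2 (t * (p₀ + 1)) ≤ Nat.clog 2 t + p₁ := by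
      refine (Nat.clog_le_iff_le_pow one_lt_two).mpr ?_
      rw [pow_add]
      exact Nat.mul_le_mul (Nat.le_pow_clog one_lt_two t) (Nat.le_pow_clog one_lt_two _)
    calc n ≤ Nat.clog 2 (Nat.clog 2 (ℓ * P)) := h7
      _ ≤ Nat.clog 2 (t + p₀) := Nat.clog_mono_right 2 h8
      _ ≤ Nat.clog 2 (t * (p₀ + 1)) := Nat.clog_mono_right 2 h9
      _ ≤ Nat.clog 2 t + p₁ := h10
  set u : ℕ := Nat.clog 2 t with hudef
  have htu : t ≤ A * u + C₂ := by
    calc t ≤ A * n + C₁ := htA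
      _ ≤ A * (u + p₁) + C₁ := Nat.add_le_add_right (Nat.mul_le_mul_left _ hn_t) _
      _ = A * u + C₂ := by rw [hC₂def]; ring
  have hupos : N + 2 ≤ u := by
    have := Nat.clog_mono_right 2 ht1
    rwa [Nat.clog_pow _ _ one_lt_two] at this
  have hlt : 2 ^ (u - 1) < t := by
    by_contra hcon
    push_neg at hcon
    have := (Nat.clog_le_iff_le_pow one_lt_two).mpr hcon
    omega
  have hfin : 2 ^ u ≤ 2 * (A * u + C₂) := by
    have he : 2 ^ u = 2 * 2 ^ (u - 1) := by
      rw [← pow_succ']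
      congr 1
      omega
    rw [he]
    exact Nat.mul_le_mul_left _ (le_trans hlt.le htu)
  have hcontra := hN u (by omega)
  have e2 : 2 ^ u ≤ 2 * A * u + 2 * C₂ := by
    refine le_trans hfin (le_of_eq ?_)
    ring
  have e3 : 2 * A * u + (2 * C₂ + 1) < 2 * A * u + 2 * C₂ := hcontra.trans_le e2
  exact absurd e3 (by
    refine Nat.not_lt.mpr ?_
    exact Nat.add_le_add_left (by omega) _)
end

section
/- In the combinatorial horoball C_f(Γ) with f(n) = 2^n over a connected graph Γ, for any two vertices (x,0) and (y,0) at graph distance N = d_Γ(x,y) ≥ 1 in Γ, the horoball distance satisfies d_f((x,0),(y,0)) ≥ 2⌊log₂ N⌋ − C for some universal constant C, and d_f((x,0),(y,0)) ≤ 2⌈log₂ N⌉ + 3. -/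
lemma horoball_adj_cases {V : Type*} {Γ : SimpleGraph V} {f : ℕ → ℕ} {a b : V × ℕ}
    (h : (horoball Γ f).Adj a b) :
    (a.1 = b.1 ∧ b.2 = a.2 + 1) ∨ (a.1 = b.1 ∧ a.2 = b.2 + 1) ∨
      (a.2 = b.2 ∧ Γ.dist a.1 b.1 ≤ f a.2) := by
  rw [horoball, SimpleGraph.fromRel_adj] at h
  rcases h with ⟨hne, (⟨h1, h2⟩ | ⟨h1, h2⟩) | (⟨h1, h2⟩ | ⟨h1, h2⟩)⟩
  · exact Or.inl ⟨h1, h2⟩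
  · exact Or.inr (Or.inr ⟨h1, h2⟩)
  · exact Or.inr (Or.inl ⟨h1.symm, h2⟩)
  · refine Or.inr (Or.inr ⟨h1.symm, ?_⟩)
    rw [SimpleGraph.dist_comm]
    rw [h1] at h2
    exact h2

/-- Along a walk in the horoball the level changes by at most one per step. -/
lemma horoball_walk_level {V : Type*} {Γ : SimpleGraph V} {f : ℕ → ℕ} {u v : V × ℕ}
    (p : (horoball Γ f).Walk u v) : u.2 ≤ v.2 + p.length ∧ v.2 ≤ u.2 + p.length := by
  induction p with
  | nil => simp
  | cons h q ih =>
    rcases horoball_adj_cases h with ⟨h1, h2⟩ | ⟨h1, h2⟩ | ⟨h1, h2⟩ <;>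
      simp only [SimpleGraph.Walk.length_cons] <;> omega

/-- Key estimate: along any walk in the horoball with scaling `2^n`,
the graph distance between the underlying vertices is controlled. -/
lemma horoball_key {V : Type*} {Γ : SimpleGraph V} (hc : Γ.Connected) {u v : V × ℕ}
    (p : (horoball Γ (fun n => 2 ^ n)).Walk u v) :
    Γ.dist u.1 v.1 + 2 ^ u.2 + 2 ^ v.2 ≤
      2 ^ ((p.length + u.2 + v.2) / 2) + 2 ^ ((p.length + u.2 + v.2 + 1) / 2) := by
  induction p with
  | @nil a =>
    simp only [SimpleGraph.Walk.length_nil, SimpleGraph.dist_self, zero_add]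
    have h1 : (a.2 + a.2) / 2 = a.2 := by omega
    have h2 : (a.2 + a.2 + 1) / 2 = a.2 := by omega
    rw [h1, h2]
  | @cons a w c h q ih =>
    obtain ⟨hl1, hl2⟩ := horoball_walk_level q
    simp only [SimpleGraph.Walk.length_cons]
    rcases horoball_adj_cases h with ⟨h1, h2⟩ | ⟨h1, h2⟩ | ⟨h1, h2⟩
    · -- up: w.1 = a.1, w.2 = a.2 + 1
      have he1 : (q.length + 1 + a.2 + c.2) = (q.length + w.2 + c.2) := by omega
      rw [he1, h1]
      have : (2 : ℕ) ^ a.2 ≤ 2 ^ w.2 := Nat.pow_le_pow_right (by norm_num) (by omega)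
      omega
    · -- down: w.1 = a.1, a.2 = w.2 + 1
      set m := q.length + w.2 + c.2 with hm
      have he1 : (q.length + 1 + a.2 + c.2) / 2 = m / 2 + 1 := by omega
      have he2 : (q.length + 1 + a.2 + c.2 + 1) / 2 = (m + 1) / 2 + 1 := by omega
      rw [he1, he2, h1]
      have hw : (2 : ℕ) ^ w.2 ≤ 2 ^ (m / 2) :=
        Nat.pow_le_pow_right (by norm_num) (by omega)
      have ha : (2 : ℕ) ^ a.2 = 2 ^ w.2 + 2 ^ w.2 := by
        rw [h2]; ring
      rw [pow_succ, pow_succ]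
      omega
    · -- horizontal: a.2 = w.2, Γ.dist a.1 w.1 ≤ 2 ^ a.2
      set m := q.length + w.2 + c.2 with hm
      have he1 : (q.length + 1 + a.2 + c.2) / 2 = (m + 1) / 2 := by omega
      have he2 : (q.length + 1 + a.2 + c.2 + 1) / 2 = m / 2 + 1 := by omega
      rw [he1, he2]
      have htri : Γ.dist a.1 c.1 ≤ Γ.dist a.1 w.1 + Γ.dist w.1 c.1 := hc.dist_triangle
      have hw : (2 : ℕ) ^ w.2 ≤ 2 ^ (m / 2) :=
        Nat.pow_le_pow_right (by norm_num) (by omega)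
      have ha : a.2 = w.2 := h1
      rw [pow_succ]
      have h2' : Γ.dist a.1 w.1 ≤ 2 ^ w.2 := by rwa [ha] at h2
      rw [ha]
      omega

/-- A vertical walk from level `k` down to level `0`. -/
lemma horoball_vert_walk {V : Type*} (Γ : SimpleGraph V) (f : ℕ → ℕ) (v : V) (k : ℕ) :
    ∃ p : (horoball Γ f).Walk (v, k) (v, 0), p.length = k := by
  induction k with
  | zero => exact ⟨SimpleGraph.Walk.nil, rfl⟩
  | succ n ih =>
    obtain ⟨p, hp⟩ := ih
    have hadj : (horoball Γ f).Adj (v, n + 1) (v, n) := by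
      rw [horoball, SimpleGraph.fromRel_adj]
      exact ⟨by simp, Or.inr (Or.inl ⟨rfl, rfl⟩)⟩
    exact ⟨SimpleGraph.Walk.cons hadj p, by simp [hp]⟩

/-- Groves–Manning distance estimate in the horoball with scaling `2^n`:
the distance between level-0 vertices at graph distance `N ≥ 1` is between
`2⌊log₂ N⌋ - C` (for a universal constant `C`) and `2⌈log₂ N⌉ + 3`. -/
theorem horoball_distance_estimate :
    ∃ C : ℕ, ∀ (V : Type) (Γ : SimpleGraph V), Γ.Connected →
      ∀ (x y : V) (N : ℕ), N = Γ.dist x y → 1 ≤ N →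
        2 * Nat.log 2 N ≤ (horoball Γ (fun n => 2 ^ n)).dist (x, 0) (y, 0) + C ∧
        (horoball Γ (fun n => 2 ^ n)).dist (x, 0) (y, 0) ≤ 2 * Nat.clog 2 N + 3 := by
  refine ⟨3, fun V Γ hc x y N hN hN1 => ?_⟩
  set G := horoball Γ (fun n => 2 ^ n) with hG
  have hxy : x ≠ y := by
    rintro rfl
    rw [Γ.dist_self] at hN
    omega
  set k := Nat.clog 2 N with hk
  -- the explicit up-across-down walk
  obtain ⟨px, hpx⟩ := horoball_vert_walk Γ (fun n => 2 ^ n) x k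
  obtain ⟨py, hpy⟩ := horoball_vert_walk Γ (fun n => 2 ^ n) y k
  have hadj : G.Adj (x, k) (y, k) := by
    rw [hG, horoball, SimpleGraph.fromRel_adj]
    refine ⟨by simp [hxy], Or.inl (Or.inr ⟨rfl, ?_⟩)⟩
    rw [← hN]
    exact Nat.le_pow_clog (by norm_num) N
  let walk : G.Walk (x, 0) (y, 0) := px.reverse.append (SimpleGraph.Walk.cons hadj py)
  have hwl : walk.length = 2 * k + 1 := by
    simp [walk, hpx, hpy]; ring
  have hupper : G.dist (x, 0) (y, 0) ≤ 2 * k + 1 := hwl ▸ SimpleGraph.dist_le walk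
  constructor
  · -- lower bound
    have hreach : G.Reachable (x, 0) (y, 0) := ⟨walk⟩
    obtain ⟨p, hp⟩ := hreach.exists_walk_length_eq_dist
    have hkey := horoball_key hc p
    simp only [hp] at hkey
    set L := G.dist (x, 0) (y, 0) with hL
    have hkey' : N + 2 ≤ 2 ^ (L / 2) + 2 ^ ((L + 1) / 2) := by
      have : Γ.dist x y + 2 ^ 0 + 2 ^ 0 ≤ 2 ^ ((L + 0 + 0) / 2) + 2 ^ ((L + 0 + 0 + 1) / 2) :=
        hkey
      simp only [← hN, pow_zero, add_zero] at this; omega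
    have hlt : N < 2 ^ ((L + 1) / 2 + 1) := by
      have h1 : (2 : ℕ) ^ (L / 2) ≤ 2 ^ ((L + 1) / 2) :=
        Nat.pow_le_pow_right (by norm_num) (by omega)
      have : N + 2 ≤ 2 ^ ((L + 1) / 2) + 2 ^ ((L + 1) / 2) := by omega
      rw [pow_succ]
      omega
    have hlog : Nat.log 2 N < (L + 1) / 2 + 1 :=
      Nat.log_lt_of_lt_pow (by omega) hlt
    omega
  · -- upper bound
    omega
end
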